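/- arXiv:2208.13216 — 2 statements merged into one kernel-verified Lean document; each statement's English description precedes it below -/
import Mathlib

section
/- Among all connected bipartite graphs on n vertices, exactly the complete bipartite graphs K_{a,b} (a+b=n) attain the maximum reciprocal distance Laplacian spectral radius, which equals n. That is, if G is connected bipartite on n vertices, then ρ(RD^L(G)) ≤ n with equality if and only if G ≅ K_{a,b} for some a,b with a+b=n. -/
open Matrix Polynomial

/-- The reciprocal distance (Harary) matrix of a graph: `(i,j)`-entry is `1/d(i,j)`
for `i ≠ j` and `0` on the diagonal. -/
noncomputable def RD {V : Type*} [Fintype V] [DecidableEq V] (G : SimpleGraph V) :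
    Matrix V V ℝ :=
  fun u v => if u = v then 0 else ((G.dist u v : ℝ))⁻¹

/-- The reciprocal distance degree of a vertex: `RTr(v) = ∑_{u ≠ v} 1/d(v,u)`. -/
noncomputable def RTr {V : Type*} [Fintype V] [DecidableEq V] (G : SimpleGraph V) (v : V) : ℝ :=
  ∑ u, RD G v u

/-- The reciprocal distance Laplacian matrix `RD^L(G) = RT(G) - RD(G)`. -/
noncomputable def RDL {V : Type*} [Fintype V] [DecidableEq V] (G : SimpleGraph V) :
    Matrix V V ℝ :=
  Matrix.diagonal (RTr G) - RD G

/-- `e : Fin n → ℝ` enumerates the eigenvalues of `M` in (weakly) decreasing order,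
with multiplicities, where the eigenvalues (with multiplicity) are the roots of the
characteristic polynomial. -/
def IsEigEnum {V : Type*} [Fintype V] [DecidableEq V] (M : Matrix V V ℝ)
    (e : Fin (Fintype.card V) → ℝ) : Prop :=
  Antitone e ∧ (↑(List.ofFn e) : Multiset ℝ) = M.charpoly.roots


/-- The spectral radius (largest eigenvalue) of a real symmetric matrix, as the
supremum of the roots of its characteristic polynomial. -/
noncomputable def specRad {V : Type*} [Fintype V] [DecidableEq V] (M : Matrix V V ℝ) : ℝ :=
  sSup {x : ℝ | x ∈ M.charpoly.roots}

section AuxLemmas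
open Finset

set_option linter.unusedSectionVars false

variable {V : Type*} [Fintype V] [DecidableEq V] {G : SimpleGraph V} {u v : V} {μ : ℝ}

lemma charpoly_eval' (M : Matrix V V ℝ) (μ : ℝ) :
    M.charpoly.eval μ = (μ • (1 : Matrix V V ℝ) - M).det := by
  rw [Matrix.charpoly, _root_.eval_det, matPolyEquiv_charmatrix]
  congr 1
  rw [eval_sub, eval_X, eval_C]
  congr 1
  ext i j
  simp [Matrix.scalar, Matrix.smul_apply, Matrix.one_apply, Matrix.diagonal]

lemma mem_roots_iff_eig (M : Matrix V V ℝ) (μ : ℝ) :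
    μ ∈ M.charpoly.roots ↔ ∃ x : V → ℝ, x ≠ 0 ∧ M.mulVec x = μ • x := by
  rw [Polynomial.mem_roots (M.charpoly_monic.ne_zero), Polynomial.IsRoot,
    charpoly_eval']
  constructor
  · intro h
    obtain ⟨x, hx, hx0⟩ := (Matrix.exists_mulVec_eq_zero_iff).mpr h
    refine ⟨x, hx, ?_⟩
    rw [Matrix.sub_mulVec, Matrix.smul_mulVec, Matrix.one_mulVec, sub_eq_zero] at hx0
    exact hx0.symm
  · rintro ⟨x, hx, hM⟩
    refine (Matrix.exists_mulVec_eq_zero_iff).mp ⟨x, hx, ?_⟩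
    rw [Matrix.sub_mulVec, Matrix.smul_mulVec, Matrix.one_mulVec, hM, sub_self]

lemma RD_symm (G : SimpleGraph V) (u v : V) : RD G u v = RD G v u := by
  unfold RD
  rw [SimpleGraph.dist_comm]
  by_cases h : u = v <;> simp [h, eq_comm]

lemma RD_nonneg (G : SimpleGraph V) (u v : V) : 0 ≤ RD G u v := by
  unfold RD; split <;> positivity

lemma RD_le_one (G : SimpleGraph V) (u v : V) : RD G u v ≤ 1 := by
  unfold RD
  split
  · norm_num
  · rcases Nat.eq_zero_or_pos (G.dist u v) with h | h
    · simp [h]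
    · rw [inv_le_one_iff₀]
      right
      exact_mod_cast h

lemma RD_adj (h : G.Adj u v) : RD G u v = 1 := by
  unfold RD
  rw [if_neg h.ne, SimpleGraph.dist_eq_one_iff_adj.mpr h]
  norm_num

lemma RD_le_half (hc : G.Connected) (hne : u ≠ v) (hna : ¬ G.Adj u v) :
    RD G u v ≤ 1 / 2 := by
  have h0 : 0 < G.dist u v := hc.pos_dist_of_ne hne
  have h1 : G.dist u v ≠ 1 := fun h => hna (SimpleGraph.dist_eq_one_iff_adj.mp h)
  have h2 : 2 ≤ G.dist u v := by omega
  unfold RD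
  rw [if_neg hne]
  rw [inv_le_comm₀ (by exact_mod_cast h0) (by norm_num)]
  rw [show (1:ℝ)/2 = (2:ℝ)⁻¹ by norm_num, inv_inv]
  exact_mod_cast h2

lemma RDL_mulVec (G : SimpleGraph V) (x : V → ℝ) (u : V) :
    (RDL G).mulVec x u = ∑ v, RD G u v * (x u - x v) := by
  simp only [RDL, Matrix.sub_mulVec, Pi.sub_apply, Matrix.mulVec_diagonal]
  rw [RTr, Finset.sum_mul]
  simp only [Matrix.mulVec, dotProduct]
  rw [← Finset.sum_sub_distrib]
  congr 1; ext v; ring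

lemma sum_RDL_mulVec (G : SimpleGraph V) (x : V → ℝ) :
    ∑ u, (RDL G).mulVec x u = 0 := by
  simp only [RDL_mulVec]
  have h2 : ∑ u, ∑ v, RD G u v * (x u - x v) = -∑ u, ∑ v, RD G u v * (x u - x v) := by
    calc ∑ u, ∑ v, RD G u v * (x u - x v)
        = ∑ u, ∑ v, RD G v u * (x v - x u) := Finset.sum_comm
      _ = ∑ u, ∑ v, -(RD G u v * (x u - x v)) := by
          refine sum_congr rfl fun u _ => sum_congr rfl fun v _ => ?_
          rw [RD_symm G v u]; ring
      _ = -∑ u, ∑ v, RD G u v * (x u - x v) := by simp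
  linarith [h2]

lemma quad_RDL (G : SimpleGraph V) (x : V → ℝ) :
    x ⬝ᵥ (RDL G).mulVec x = (1/2) * ∑ u, ∑ v, RD G u v * (x u - x v)^2 := by
  have hA : x ⬝ᵥ (RDL G).mulVec x = ∑ u, ∑ v, RD G u v * x u * (x u - x v) := by
    simp only [dotProduct, RDL_mulVec, Finset.mul_sum]
    exact sum_congr rfl fun u _ => sum_congr rfl fun v _ => by ring
  have hB : ∑ u, ∑ v, RD G u v * x v * (x u - x v)
      = -∑ u, ∑ v, RD G u v * x u * (x u - x v) := by
    calc ∑ u, ∑ v, RD G u v * x v * (x u - x v)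
        = ∑ u, ∑ v, RD G v u * x u * (x v - x u) := Finset.sum_comm
      _ = ∑ u, ∑ v, -(RD G u v * x u * (x u - x v)) := by
          refine sum_congr rfl fun u _ => sum_congr rfl fun v _ => ?_
          rw [RD_symm G v u]; ring
      _ = -∑ u, ∑ v, RD G u v * x u * (x u - x v) := by simp
  have hsplit : ∑ u, ∑ v, RD G u v * (x u - x v)^2
      = (∑ u, ∑ v, RD G u v * x u * (x u - x v))
        - ∑ u, ∑ v, RD G u v * x v * (x u - x v) := by
    rw [← Finset.sum_sub_distrib]
    refine sum_congr rfl fun u _ => ?_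
    rw [← Finset.sum_sub_distrib]
    exact sum_congr rfl fun v _ => by ring
  rw [hsplit, hB, hA]
  ring

lemma sq_sum_identity (x : V → ℝ) (h : ∑ u, x u = 0) :
    ∑ u, ∑ v, (x u - x v)^2 = 2 * (Fintype.card V : ℝ) * ∑ u, x u^2 := by
  have inner : ∀ u : V, ∑ v, (x u - x v)^2
      = (Fintype.card V : ℝ) * x u ^ 2 + ∑ v, x v ^ 2 := by
    intro u
    have : ∀ v : V, (x u - x v)^2 = x u^2 + x v^2 - 2 * x u * x v := fun v => by ring
    simp_rw [this]
    rw [Finset.sum_sub_distrib, Finset.sum_add_distrib, Finset.sum_const,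
      Finset.card_univ, nsmul_eq_mul]
    have : ∑ v, 2 * x u * x v = 2 * x u * ∑ v, x v := by rw [Finset.mul_sum]
    rw [this, h]
    ring
  simp_rw [inner]
  rw [Finset.sum_add_distrib, Finset.sum_const, Finset.card_univ, nsmul_eq_mul,
    ← Finset.mul_sum]
  ring

lemma eig_sum_zero (hμ : μ ≠ 0) {x : V → ℝ} (heig : (RDL G).mulVec x = μ • x) :
    ∑ u, x u = 0 := by
  have h := sum_RDL_mulVec G x
  rw [heig] at h
  simp only [Pi.smul_apply, smul_eq_mul, ← Finset.mul_sum] at h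
  exact (mul_eq_zero.mp h).resolve_left hμ

lemma sum_sq_pos {x : V → ℝ} (hx : x ≠ 0) : 0 < ∑ u, x u ^ 2 := by
  obtain ⟨u, hu⟩ := Function.ne_iff.mp hx
  exact Finset.sum_pos' (fun v _ => sq_nonneg _)
    ⟨u, Finset.mem_univ u, lt_of_le_of_ne (sq_nonneg _) (Ne.symm (pow_ne_zero 2 hu))⟩

lemma dot_eig {x : V → ℝ} (heig : (RDL G).mulVec x = μ • x) :
    x ⬝ᵥ (RDL G).mulVec x = μ * ∑ u, x u ^ 2 := by
  rw [heig]
  simp only [dotProduct, Pi.smul_apply, smul_eq_mul]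
  rw [Finset.mul_sum]
  exact Finset.sum_congr rfl fun u _ => by ring

lemma root_le_card (hμ : μ ∈ (RDL G).charpoly.roots) : μ ≤ (Fintype.card V : ℝ) := by
  rcases le_or_gt μ 0 with h | h
  · exact h.trans (by positivity)
  · obtain ⟨x, hx, heig⟩ := (mem_roots_iff_eig (RDL G) μ).mp hμ
    have hsum := eig_sum_zero h.ne' heig
    have hq := quad_RDL G x
    have hle : ∑ u, ∑ v, RD G u v * (x u - x v)^2 ≤ ∑ u, ∑ v, (x u - x v)^2 := by
      refine Finset.sum_le_sum fun u _ => Finset.sum_le_sum fun v _ => ?_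
      nlinarith [RD_le_one G u v, sq_nonneg (x u - x v), RD_nonneg G u v]
    rw [sq_sum_identity x hsum] at hle
    rw [dot_eig heig] at hq
    have hS := sum_sq_pos hx
    have : μ * ∑ u, x u ^ 2 ≤ (Fintype.card V : ℝ) * ∑ u, x u ^ 2 := by
      rw [hq]; linarith
    exact le_of_mul_le_mul_right (by linarith) hS

lemma zero_mem_roots (hne : Nonempty V) : (0:ℝ) ∈ (RDL G).charpoly.roots := by
  rw [mem_roots_iff_eig]
  refine ⟨fun _ => 1, ?_, ?_⟩
  · intro h
    obtain ⟨v⟩ := hne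
    have := congrFun h v
    norm_num at this
  · ext u
    rw [RDL_mulVec]
    simp

lemma flat_of_card_root (hc : G.Connected)
    (h : ((Fintype.card V : ℝ)) ∈ (RDL G).charpoly.roots) (hn : 2 ≤ Fintype.card V) :
    ∃ x : V → ℝ, x ≠ 0 ∧ (∑ u, x u = 0) ∧
      ∀ u v, u ≠ v → ¬ G.Adj u v → x u = x v := by
  obtain ⟨x, hx, heig⟩ := (mem_roots_iff_eig (RDL G) _).mp h
  have hcard : (0:ℝ) < (Fintype.card V : ℝ) := by
    have : (0:ℕ) < Fintype.card V := by omega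
    exact_mod_cast this
  have hsum := eig_sum_zero hcard.ne' heig
  have hq := quad_RDL G x
  rw [dot_eig heig] at hq
  have key : ∑ u, ∑ v, (1 - RD G u v) * (x u - x v)^2 = 0 := by
    have hsplit : ∑ u, ∑ v, (1 - RD G u v) * (x u - x v)^2
        = (∑ u, ∑ v, (x u - x v)^2) - ∑ u, ∑ v, RD G u v * (x u - x v)^2 := by
      rw [← Finset.sum_sub_distrib]
      refine sum_congr rfl fun u _ => ?_
      rw [← Finset.sum_sub_distrib]
      exact sum_congr rfl fun v _ => by ring
    rw [hsplit, sq_sum_identity x hsum]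
    linarith
  have hnn : ∀ u ∈ (univ : Finset V), ∀ v ∈ (univ : Finset V),
      0 ≤ (1 - RD G u v) * (x u - x v)^2 := fun u _ v _ =>
    mul_nonneg (by linarith [RD_le_one G u v]) (sq_nonneg _)
  have hterm : ∀ u v : V, (1 - RD G u v) * (x u - x v)^2 = 0 := by
    intro u v
    have houter : ∀ u ∈ (univ : Finset V),
        ∑ v, (1 - RD G u v) * (x u - x v)^2 = 0 :=
      (Finset.sum_eq_zero_iff_of_nonneg
        (fun u hu => Finset.sum_nonneg (fun v hv => hnn u hu v hv))).mp key
    exact (Finset.sum_eq_zero_iff_of_nonneg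
      (fun v hv => hnn u (Finset.mem_univ u) v hv)).mp
      (houter u (Finset.mem_univ u)) v (Finset.mem_univ v)
  refine ⟨x, hx, hsum, fun u v hne hna => ?_⟩
  have h2 := RD_le_half hc hne hna
  have := hterm u v
  have hfac : (1 - RD G u v) > 0 := by linarith
  have : (x u - x v)^2 = 0 := by
    rcases mul_eq_zero.mp this with h | h
    · linarith
    · exact h
  have := pow_eq_zero_iff (n := 2) (by norm_num) |>.mp this
  linarith [sub_eq_zero.mp this]

lemma exists_adj (hc : G.Connected) (hn : 2 ≤ Fintype.card V) : ∃ u v : V, G.Adj u v := by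
  obtain ⟨u, v, huv⟩ := Fintype.exists_pair_of_one_lt_card (α := V) (by omega)
  obtain ⟨w⟩ := hc.preconnected u v
  cases w with
  | nil => exact absurd rfl huv
  | cons h _ => exact ⟨_, _, h⟩

lemma eig_of_bipartite (c : V → Bool)
    (hAdj : ∀ u v : V, G.Adj u v ↔ c u ≠ c v)
    (h0 : ∃ u, c u = false) (h1 : ∃ u, c u = true) :
    ∃ x : V → ℝ, x ≠ 0 ∧ (RDL G).mulVec x = (Fintype.card V : ℝ) • x := by
  classical
  set A : Finset V := univ.filter (fun v => c v = false) with hA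
  set B : Finset V := univ.filter (fun v => c v = true) with hB
  set a : ℕ := A.card
  set b : ℕ := B.card
  have hB' : B = univ.filter (fun v => ¬ (c v = false)) := by
    ext v; simp [hB]
  have hAB : a + b = Fintype.card V := by
    rw [← Finset.card_univ]
    show A.card + B.card = _
    rw [hB']
    exact Finset.card_filter_add_card_filter_not
      (s := (univ : Finset V)) (p := fun v => c v = false)
  obtain ⟨u0, hu0⟩ := h0
  obtain ⟨u1, hu1⟩ := h1
  have hapos : 0 < a := Finset.card_pos.mpr ⟨u0, by simp [hA, hu0]⟩
  have hbpos : 0 < b := Finset.card_pos.mpr ⟨u1, by simp [hB, hu1]⟩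
  refine ⟨fun v => if c v then -(a : ℝ) else (b : ℝ), ?_, ?_⟩
  · intro h
    have := congrFun h u1
    rw [hu1] at this
    simp at this
    omega
  · ext u
    rw [RDL_mulVec]
    set x : V → ℝ := fun v => if c v then -(a : ℝ) else (b : ℝ) with hx
    have hterm : ∀ v : V, RD G u v * (x u - x v)
        = if c v = c u then 0 else (x u - x v) := by
      intro v
      by_cases h : c v = c u
      · rw [if_pos h]
        have : x v = x u := by simp only [hx, h]
        rw [this, sub_self, mul_zero]
      · rw [if_neg h, RD_adj ((hAdj u v).mpr (Ne.symm h)), one_mul]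
    rw [Finset.sum_congr rfl fun v _ => hterm v]
    rw [Finset.sum_ite, Finset.sum_const, smul_zero, zero_add]
    cases hcu : c u with
    | false =>
      have hfilter : univ.filter (fun v => ¬ c v = false) = B := by
        ext v; simp [hB]
      rw [hfilter]
      have hconst : ∀ v ∈ B, x u - x v = (a : ℝ) + b := by
        intro v hv
        have hcv : c v = true := by simpa [hB] using hv
        simp [hx, hcv, hcu]; ring
      rw [Finset.sum_congr rfl hconst, Finset.sum_const, nsmul_eq_mul]
      have hxu : x u = (b : ℝ) := by simp [hx, hcu]
      rw [Pi.smul_apply, hxu, smul_eq_mul, ← hAB]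
      push_cast
      ring
    | true =>
      have hfilter : univ.filter (fun v => ¬ c v = true) = A := by
        ext v; simp [hA]
      rw [hfilter]
      have hconst : ∀ v ∈ A, x u - x v = -((a : ℝ) + b) := by
        intro v hv
        have hcv : c v = false := by simpa [hA] using hv
        simp [hx, hcv, hcu]; ring
      rw [Finset.sum_congr rfl hconst, Finset.sum_const, nsmul_eq_mul]
      have hxu : x u = -(a : ℝ) := by simp [hx, hcu]
      rw [Pi.smul_apply, hxu, smul_eq_mul, ← hAB]
      push_cast
      ring

lemma bool_of_iso {a b : ℕ} (φ : G ≃g completeBipartiteGraph (Fin a) (Fin b))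
    (hc : G.Connected) (hn : 2 ≤ Fintype.card V) :
    ∃ c : V → Bool, (∀ u v : V, G.Adj u v ↔ c u ≠ c v) ∧
      (∃ u, c u = false) ∧ ∃ u, c u = true := by
  refine ⟨fun v => (φ v).isLeft, ?_, ?_, ?_⟩
  · intro u v
    rw [← φ.map_rel_iff]
    rcases h1 : φ u with l | r <;> rcases h2 : φ v with l2 | r2 <;>
      simp_all [completeBipartiteGraph]
  · obtain ⟨u, v, huv⟩ := exists_adj hc hn
    have h : ¬ ((φ u).isLeft = (φ v).isLeft) := by
      have := φ.map_rel_iff.mpr huv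
      rcases h1 : φ u with l | r <;> rcases h2 : φ v with l2 | r2 <;>
        simp_all [completeBipartiteGraph]
    cases hu : (φ u).isLeft
    · exact ⟨u, hu⟩
    · exact ⟨v, by simp_all⟩
  · obtain ⟨u, v, huv⟩ := exists_adj hc hn
    have h : ¬ ((φ u).isLeft = (φ v).isLeft) := by
      have := φ.map_rel_iff.mpr huv
      rcases h1 : φ u with l | r <;> rcases h2 : φ v with l2 | r2 <;>
        simp_all [completeBipartiteGraph]
    cases hu : (φ u).isLeft
    · exact ⟨v, by simp_all⟩
    · exact ⟨u, hu⟩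

lemma iso_of_flat (C : G.Coloring (Fin 2)) (x : V → ℝ) (hx : x ≠ 0)
    (hsum : ∑ u, x u = 0)
    (hflat : ∀ u v : V, u ≠ v → ¬ G.Adj u v → x u = x v) :
    ∃ a b : ℕ, a + b = Fintype.card V ∧
      Nonempty (G ≃g completeBipartiteGraph (Fin a) (Fin b)) := by
  classical
  have hconst : ∀ u v : V, C u = C v → x u = x v := by
    intro u v h
    by_cases huv : u = v
    · rw [huv]
    · exact hflat u v huv (fun hadj => C.valid hadj h)
  have hnotconst : ¬ ∀ u v : V, x u = x v := by
    intro h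
    apply hx
    have hzero : ∀ u : V, x u = 0 := by
      intro u
      have hVne : Nonempty V := ⟨u⟩
      have : ∑ v : V, x v = (Fintype.card V : ℝ) * x u := by
        rw [Finset.sum_congr rfl fun v _ => h v u, Finset.sum_const,
          Finset.card_univ, nsmul_eq_mul]
      rw [hsum] at this
      have hcard : (0:ℝ) < (Fintype.card V : ℝ) := by
        exact_mod_cast Fintype.card_pos
      have := this.symm
      rcases mul_eq_zero.mp this with h' | h'
      · exact absurd h' hcard.ne'
      · exact h'
    funext u; exact hzero u
  have hdiff : ∃ u v : V, C u ≠ C v := by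
    by_contra h
    push_neg at h
    exact hnotconst fun u v => hconst u v (h u v)
  have hfin2 : ∀ i j : Fin 2, i ≠ 0 → j ≠ 0 → i = j := by decide
  obtain ⟨w0, w1, hw⟩ := hdiff
  -- normalize so that C w0 = 0
  obtain ⟨u0, u1, hu0, hu1⟩ : ∃ u0 u1 : V, C u0 = 0 ∧ C u1 ≠ 0 := by
    by_cases h : C w0 = 0
    · exact ⟨w0, w1, h, fun h' => hw (h.trans h'.symm)⟩
    · have : C w1 = 0 := by
        by_contra h'
        exact hw (hfin2 _ _ h h')
      exact ⟨w1, w0, this, h⟩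
  have hxdiff : x u0 ≠ x u1 := by
    intro h
    apply hnotconst
    intro u v
    have key : ∀ w : V, x w = x u0 := by
      intro w
      by_cases hcw : C w = 0
      · exact hconst w u0 (hcw.trans hu0.symm)
      · exact (hconst w u1 (hfin2 _ _ hcw hu1)).trans h.symm
    rw [key u, key v]
  have hxval : ∀ u : V, (C u = 0 → x u = x u0) ∧ (C u ≠ 0 → x u = x u1) := by
    intro u
    constructor
    · intro h; exact hconst u u0 (h.trans hu0.symm)
    · intro h; exact hconst u u1 (hfin2 _ _ h hu1)
  have hadj : ∀ u v : V, G.Adj u v ↔ ¬ (C u = 0 ↔ C v = 0) := by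
    intro u v
    constructor
    · intro h hiff
      have hne := C.valid h
      by_cases hcu : C u = 0
      · exact hne (hcu.trans (hiff.mp hcu).symm)
      · have hcv : C v ≠ 0 := fun h' => hcu (hiff.mpr h')
        exact hne (hfin2 _ _ hcu hcv)
    · intro h
      have hxy : x u ≠ x v := by
        by_cases hcu : C u = 0
        · have hcv : C v ≠ 0 := fun h' => h ⟨fun _ => h', fun _ => hcu⟩
          rw [(hxval u).1 hcu, (hxval v).2 hcv]
          exact hxdiff
        · have hcv : C v = 0 := by
            by_contra h'
            exact h ⟨fun hh => absurd hh hcu, fun hh => absurd hh h'⟩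
          rw [(hxval u).2 hcu, (hxval v).1 hcv]
          exact hxdiff.symm
      by_contra hna
      have hne : u ≠ v := fun h' => hxy (by rw [h'])
      exact hxy (hflat u v hne hna)
  set p : V → Prop := fun v => C v = 0 with hp
  have hcards : Fintype.card {v // p v} + Fintype.card {v // ¬ p v}
      = Fintype.card V := by
    have := Fintype.card_congr (Equiv.sumCompl p)
    rw [Fintype.card_sum] at this
    exact this
  refine ⟨Fintype.card {v // p v}, Fintype.card {v // ¬ p v}, hcards, ⟨?_⟩⟩
  refine ⟨(Equiv.sumCompl p).symm.trans
    ((Fintype.equivFin {v // p v}).sumCongr (Fintype.equivFin {v // ¬ p v})), ?_⟩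
  intro u v
  simp only [Equiv.trans_apply]
  by_cases hu : p u <;> by_cases hv : p v
  · rw [Equiv.sumCompl_symm_apply_of_pos hu, Equiv.sumCompl_symm_apply_of_pos hv]
    simp [completeBipartiteGraph, hadj u v, hu, hv]
    exact iff_of_true hu hv
  · rw [Equiv.sumCompl_symm_apply_of_pos hu, Equiv.sumCompl_symm_apply_of_neg hv]
    simp [completeBipartiteGraph, hadj u v, hu, hv]
    exact fun h => hv (h.mp hu)
  · rw [Equiv.sumCompl_symm_apply_of_neg hu, Equiv.sumCompl_symm_apply_of_pos hv]
    simp [completeBipartiteGraph, hadj u v, hu, hv]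
    exact fun h => hu (h.mpr hv)
  · rw [Equiv.sumCompl_symm_apply_of_neg hu, Equiv.sumCompl_symm_apply_of_neg hv]
    simp [completeBipartiteGraph, hadj u v, hu, hv]
    exact iff_of_false hu hv

end AuxLemmas

theorem stmt7 {V : Type*} [Fintype V] [DecidableEq V] (G : SimpleGraph V)
    (hc : G.Connected) (hn : 2 ≤ Fintype.card V) (hb : G.Colorable 2) :
    specRad (RDL G) ≤ (Fintype.card V : ℝ) ∧
      (specRad (RDL G) = (Fintype.card V : ℝ) ↔
        ∃ a b : ℕ, a + b = Fintype.card V ∧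
          Nonempty (G ≃g completeBipartiteGraph (Fin a) (Fin b))) := by
  classical
  have hVne : Nonempty V := Fintype.card_pos_iff.mp (by omega)
  have hfin : ({x : ℝ | x ∈ (RDL G).charpoly.roots} : Set ℝ).Finite :=
    (RDL G).charpoly.roots.toFinset.finite_toSet.subset
      (fun x hx => Multiset.mem_toFinset.mpr hx)
  have hbdd : BddAbove {x : ℝ | x ∈ (RDL G).charpoly.roots} := hfin.bddAbove
  have h0S : (0:ℝ) ∈ {x : ℝ | x ∈ (RDL G).charpoly.roots} := zero_mem_roots hVne
  have hub : ∀ y ∈ {x : ℝ | x ∈ (RDL G).charpoly.roots},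
      y ≤ (Fintype.card V : ℝ) := fun y hy => root_le_card hy
  have hle : specRad (RDL G) ≤ (Fintype.card V : ℝ) :=
    Real.sSup_le hub (by positivity)
  refine ⟨hle, ?_, ?_⟩
  · intro heq
    have hmem : (Fintype.card V : ℝ) ∈ {x : ℝ | x ∈ (RDL G).charpoly.roots} := by
      rw [← heq]
      exact Set.Nonempty.csSup_mem ⟨0, h0S⟩ hfin
    obtain ⟨x, hx, hsum, hflat⟩ := flat_of_card_root hc hmem hn
    obtain ⟨C⟩ := hb
    exact iso_of_flat C x hx hsum hflat
  · rintro ⟨a, b, hab, ⟨φ⟩⟩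
    obtain ⟨c, hAdj, h0, h1⟩ := bool_of_iso φ hc hn
    obtain ⟨x, hx, heig⟩ := eig_of_bipartite c hAdj h0 h1
    have hmem : (Fintype.card V : ℝ) ∈ {x : ℝ | x ∈ (RDL G).charpoly.roots} :=
      (mem_roots_iff_eig _ _).mpr ⟨x, hx, heig⟩
    exact le_antisymm hle (le_csSup hbdd hmem)
end

section
/- Let G be a connected graph on n ≥ 2 vertices and S = {v_1,...,v_r} a clique of G such that N_G(v_i) \ S = N_G(v_j) \ S for all 1 ≤ i,j ≤ r. Then all vertices of S have the same reciprocal distance degree T, and T + 1 is an eigenvalue of RD^L(G) with multiplicity at least r − 1. -/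
open Matrix Polynomial

lemma exists_walk_le {V : Type*} (G : SimpleGraph V) (S : Finset V)
    (hnbr : ∀ u ∈ S, ∀ w ∈ S, G.neighborSet u \ (S : Set V) = G.neighborSet w \ (S : Set V))
    {u : V} (hu : u ∈ S) :
    ∀ {v w : V} (p : G.Walk v w), v ∈ S → w ∉ S → ∃ q : G.Walk u w, q.length ≤ p.length := by
  intro v w p
  induction p with
  | nil => intro hv hw; exact absurd hv hw
  | @cons a x w h p ih =>
    intro ha hw
    by_cases hx : x ∈ S
    · obtain ⟨q, hq⟩ := ih hx hw
      exact ⟨q, by simp only [SimpleGraph.Walk.length_cons]; omega⟩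
    · have hadj : G.Adj u x := by
        have he := hnbr a ha u hu
        have hm : x ∈ G.neighborSet u \ (S : Set V) := by
          rw [← he]; exact ⟨h, hx⟩
        exact hm.1
      exact ⟨SimpleGraph.Walk.cons hadj p, by simp⟩

lemma dist_eq_of_clique {V : Type*} (G : SimpleGraph V) (hc : G.Connected) (S : Finset V)
    (hnbr : ∀ u ∈ S, ∀ w ∈ S, G.neighborSet u \ (S : Set V) = G.neighborSet w \ (S : Set V))
    {u v w : V} (hu : u ∈ S) (hv : v ∈ S) (hw : w ∉ S) :
    G.dist u w = G.dist v w := by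
  have key : ∀ a ∈ S, ∀ b ∈ S, G.dist a w ≤ G.dist b w := by
    intro a ha b hb
    obtain ⟨p, hp⟩ := hc.exists_walk_length_eq_dist b w
    obtain ⟨q, hq⟩ := exists_walk_le G S hnbr ha p hb hw
    calc G.dist a w ≤ q.length := SimpleGraph.dist_le q
      _ ≤ p.length := hq
      _ = G.dist b w := hp
  exact le_antisymm (key u hu v hv) (key v hv u hu)

lemma RD_symm_s10 {V : Type*} [Fintype V] [DecidableEq V] (G : SimpleGraph V) (a b : V) :
    RD G a b = RD G b a := by
  unfold RD
  by_cases h : a = b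
  · simp [h]
  · simp [h, Ne.symm h, SimpleGraph.dist_comm]

lemma RD_of_adj {V : Type*} [Fintype V] [DecidableEq V] (G : SimpleGraph V) {a b : V}
    (h : G.Adj a b) : RD G a b = 1 := by
  have hne : a ≠ b := h.ne
  simp [RD, hne, SimpleGraph.dist_eq_one_iff_adj.mpr h]

lemma RD_eq_of_mem {V : Type*} [Fintype V] [DecidableEq V] (G : SimpleGraph V)
    (hc : G.Connected) (S : Finset V) (hclique : G.IsClique (S : Set V))
    (hnbr : ∀ u ∈ S, ∀ w ∈ S, G.neighborSet u \ (S : Set V) = G.neighborSet w \ (S : Set V))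
    {u v x : V} (hu : u ∈ S) (hv : v ∈ S) (hxu : x ≠ u) (hxv : x ≠ v) :
    RD G u x = RD G v x := by
  by_cases hx : x ∈ S
  · rw [RD_of_adj G (hclique hu hx (Ne.symm hxu)), RD_of_adj G (hclique hv hx (Ne.symm hxv))]
  · unfold RD
    rw [if_neg (Ne.symm hxu), if_neg (Ne.symm hxv),
      dist_eq_of_clique G hc S hnbr hu hv hx]

lemma RTr_eq_of_mem {V : Type*} [Fintype V] [DecidableEq V] (G : SimpleGraph V)
    (hc : G.Connected) (S : Finset V) (hclique : G.IsClique (S : Set V))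
    (hnbr : ∀ u ∈ S, ∀ w ∈ S, G.neighborSet u \ (S : Set V) = G.neighborSet w \ (S : Set V))
    {u v : V} (hu : u ∈ S) (hv : v ∈ S) : RTr G u = RTr G v := by
  by_cases huv : u = v
  · rw [huv]
  unfold RTr
  rw [← Equiv.sum_comp (Equiv.swap u v) (RD G u)]
  refine Finset.sum_congr rfl fun x _ => ?_
  by_cases hxu : x = u
  · subst hxu
    rw [Equiv.swap_apply_left, RD_symm_s10]
  by_cases hxv : x = v
  · subst hxv
    rw [Equiv.swap_apply_right]
    simp [RD]
  · rw [Equiv.swap_apply_of_ne_of_ne hxu hxv]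
    exact RD_eq_of_mem G hc S hclique hnbr hu hv hxu hxv


lemma RDL_isHermitian {V : Type*} [Fintype V] [DecidableEq V] (G : SimpleGraph V) :
    (RDL G).IsHermitian := by
  unfold Matrix.IsHermitian
  ext i j
  rw [conjTranspose_apply, star_trivial]
  unfold RDL
  rw [Matrix.sub_apply, Matrix.sub_apply, RD_symm_s10]
  congr 1
  by_cases h : i = j
  · rw [h]
  · rw [Matrix.diagonal_apply_ne _ h, Matrix.diagonal_apply_ne _ (Ne.symm h)]

lemma RD_self {V : Type*} [Fintype V] [DecidableEq V] (G : SimpleGraph V) (a : V) :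
    RD G a a = 0 := by simp [RD]

lemma RDL_mulVec_eig {V : Type*} [Fintype V] [DecidableEq V] (G : SimpleGraph V)
    (hc : G.Connected) (S : Finset V) (hclique : G.IsClique (S : Set V))
    (hnbr : ∀ u ∈ S, ∀ w ∈ S, G.neighborSet u \ (S : Set V) = G.neighborSet w \ (S : Set V))
    {u0 u : V} (hu0 : u0 ∈ S) (hu : u ∈ S) (hne : u ≠ u0) :
    RDL G *ᵥ (Pi.single u0 1 - Pi.single u 1)
      = (RTr G u0 + 1) • (Pi.single u0 1 - Pi.single u 1) := by
  have hadj : G.Adj u0 u := hclique hu0 hu (Ne.symm hne)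
  funext w
  have hL : (RDL G *ᵥ (Pi.single u0 1 - Pi.single u 1)) w = RDL G w u0 - RDL G w u := by
    rw [Matrix.mulVec_sub, Pi.sub_apply, Matrix.mulVec_single, Matrix.mulVec_single]
    simp
  rw [hL]
  have hentry : ∀ y : V, RDL G w y = (if w = y then RTr G w else 0) - RD G w y := by
    intro y
    unfold RDL
    rw [Matrix.sub_apply, Matrix.diagonal_apply]
  rw [hentry, hentry, Pi.smul_apply, Pi.sub_apply, Pi.single_apply, Pi.single_apply,
    smul_eq_mul]
  by_cases hw0 : w = u0
  · subst hw0
    rw [if_pos rfl, if_neg hne.symm, if_pos rfl, if_neg (Ne.symm hne), RD_self,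
      RD_of_adj G hadj]
    ring
  by_cases hwu : w = u
  · subst hwu
    rw [if_neg hw0, if_pos rfl, if_neg hw0, if_pos rfl, RD_self,
      RD_of_adj G (G.adj_symm hadj), RTr_eq_of_mem G hc S hclique hnbr hu hu0]
    ring
  · rw [if_neg hw0, if_neg hwu, if_neg hw0, if_neg hwu]
    have h1 : RD G w u0 = RD G u0 w := RD_symm_s10 G w u0
    have h2 : RD G w u = RD G u w := RD_symm_s10 G w u
    rw [h1, h2, RD_eq_of_mem G hc S hclique hnbr hu0 hu hw0 hwu]
    ring
lemma charpoly_conj_eq {n R : Type*} [Fintype n] [DecidableEq n] [CommRing R]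
    (U V A : Matrix n n R) (hUV : U * V = 1) (hVU : V * U = 1) :
    (U * A * V).charpoly = A.charpoly := by
  have key : charmatrix (U * A * V) = U.map C * charmatrix A * V.map C := by
    rw [charmatrix, charmatrix, RingHom.mapMatrix_apply, RingHom.mapMatrix_apply]
    rw [Matrix.mul_sub, Matrix.sub_mul]
    congr 1
    · rw [Matrix.mul_assoc, (scalar_commute (X : R[X]) (fun r' => Commute.all _ _) _).eq,
        ← Matrix.mul_assoc, ← Matrix.map_mul, hUV]
      simp
    · rw [← Matrix.map_mul, ← Matrix.map_mul]
  rw [Matrix.charpoly, Matrix.charpoly, key, det_mul, det_mul]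
  have : U.map C ^ 0 = 1 := rfl
  have h1 : (U.map C).det * (V.map C).det = 1 := by
    rw [← det_mul, ← Matrix.map_mul, hUV]; simp
  ring_nf
  calc (U.map C).det * (charmatrix A).det * (V.map C).det
      = (U.map C).det * (V.map C).det * (charmatrix A).det := by ring
    _ = (charmatrix A).det := by rw [h1, one_mul]

lemma charpoly_diagonal {n R : Type*} [Fintype n] [DecidableEq n] [CommRing R] (d : n → R) :
    (Matrix.diagonal d).charpoly = ∏ i, (X - C (d i)) := by
  have : charmatrix (Matrix.diagonal d) = Matrix.diagonal (fun i => (X : R[X]) - C (d i)) := by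
    ext i j
    by_cases h : i = j <;> simp [charmatrix, h, Matrix.diagonal, scalar]
  rw [Matrix.charpoly, this, det_diagonal]

lemma roots_charpoly_diagonal {n : Type*} [Fintype n] [DecidableEq n] (d : n → ℝ) :
    (Matrix.diagonal d).charpoly.roots = Multiset.map d Finset.univ.val := by
  rw [_root_.charpoly_diagonal]
  have : ∏ i, ((X : ℝ[X]) - C (d i)) = (Multiset.map (fun a => X - C a) (Multiset.map d Finset.univ.val)).prod := by
    rw [Multiset.map_map]; rfl
  rw [this, roots_multiset_prod_X_sub_C]

lemma roots_charpoly_hermitian {n : Type*} [Fintype n] [DecidableEq n] {A : Matrix n n ℝ}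
    (hA : A.IsHermitian) :
    A.charpoly.roots = Multiset.map hA.eigenvalues Finset.univ.val := by
  have hsp := hA.spectral_theorem
  have hd : Matrix.diagonal ((RCLike.ofReal : ℝ → ℝ) ∘ hA.eigenvalues) = Matrix.diagonal hA.eigenvalues := by
    congr 1
  set U := (hA.eigenvectorUnitary : Matrix n n ℝ)
  have h1 : U * star U = 1 := Matrix.mem_unitaryGroup_iff.mp hA.eigenvectorUnitary.2
  have h2 : star U * U = 1 := Matrix.mem_unitaryGroup_iff'.mp hA.eigenvectorUnitary.2
  rw [show A.charpoly = (Matrix.diagonal hA.eigenvalues).charpoly by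
    conv_lhs => rw [hsp]
    rw [hd]
    exact charpoly_conj_eq U (star U) _ h1 h2]
  exact roots_charpoly_diagonal _

lemma card_le_count_roots {n : Type*} [Fintype n] [DecidableEq n] {A : Matrix n n ℝ}
    (hA : A.IsHermitian) (μ : ℝ) {ι : Type*} [Fintype ι] (v : ι → (n → ℝ))
    (hli : LinearIndependent ℝ v) (hev : ∀ i, A *ᵥ v i = μ • v i) :
    Fintype.card ι ≤ Multiset.count μ A.charpoly.roots := by
  classical
  -- basis of eigenvectors on (n → ℝ)
  let b : Module.Basis n ℝ (n → ℝ) :=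
    hA.eigenvectorBasis.toBasis.map (WithLp.linearEquiv 2 ℝ (n → ℝ))
  have hb : ∀ i, b i = ⇑(hA.eigenvectorBasis i) := by
    intro i; simp [b]
  have hbev : ∀ i, A *ᵥ b i = hA.eigenvalues i • b i := by
    intro i; rw [hb]; exact hA.mulVec_eigenvectorBasis i
  set s : Finset n := Finset.univ.filter (fun i => hA.eigenvalues i = μ) with hs
  set E : Submodule ℝ (n → ℝ) := Submodule.span ℝ ↑(s.image b) with hE
  -- every μ-eigenvector lies in E
  have hmem : ∀ x : n → ℝ, A *ᵥ x = μ • x → x ∈ E := by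
    intro x hx
    set c := b.repr x with hc
    have hsum : ∑ i, c i • b i = x := b.sum_repr x
    have hxx : ∑ i, (μ * c i) • b i = ∑ i, (hA.eigenvalues i * c i) • b i := by
      calc ∑ i, (μ * c i) • b i = μ • ∑ i, c i • b i := by
            rw [Finset.smul_sum]; simp [smul_smul]
        _ = A *ᵥ x := by rw [hsum, hx]
        _ = A *ᵥ ∑ i, c i • b i := by rw [hsum]
        _ = ∑ i, c i • (A *ᵥ b i) := by
            rw [show (A *ᵥ ∑ i, c i • b i) = A.mulVecLin (∑ i, c i • b i) from rfl, map_sum]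
            simp [Matrix.mulVecLin_apply, Matrix.mulVec_smul]
        _ = ∑ i, (hA.eigenvalues i * c i) • b i := by
            refine Finset.sum_congr rfl fun i _ => ?_
            rw [hbev i, smul_smul, mul_comm]
    have hdiff : ∑ i, (μ * c i - hA.eigenvalues i * c i) • b i = 0 := by
      simp only [sub_smul, Finset.sum_sub_distrib, hxx, sub_self]
    have hcoef := Fintype.linearIndependent_iff.mp b.linearIndependent _ hdiff
    have hzero : ∀ i, hA.eigenvalues i ≠ μ → c i = 0 := by
      intro i hi
      have h := hcoef i
      rcases mul_eq_zero.mp (by linarith [h] : (μ - hA.eigenvalues i) * c i = 0) with h' | h'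
      · exact absurd (by linarith : hA.eigenvalues i = μ) hi
      · exact h'
    rw [← hsum]
    refine Submodule.sum_mem _ fun i _ => ?_
    by_cases hi : hA.eigenvalues i = μ
    · exact Submodule.smul_mem _ _ (Submodule.subset_span
        (Finset.mem_coe.mpr (Finset.mem_image.mpr ⟨i, by simp [hs, hi], rfl⟩)))
    · rw [hzero i hi, zero_smul]; exact Submodule.zero_mem _
  -- linear independence inside E
  have hvE : ∀ i, v i ∈ E := fun i => hmem _ (hev i)
  have hli' : LinearIndependent ℝ (fun i => (⟨v i, hvE i⟩ : E)) := by
    apply LinearIndependent.of_comp E.subtype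
    exact hli
  have h1 : Fintype.card ι ≤ Module.finrank ℝ E :=
    hli'.fintype_card_le_finrank
  have h2 : Module.finrank ℝ E ≤ s.card := by
    calc Module.finrank ℝ E ≤ (s.image b).card := finrank_span_finset_le_card _
      _ ≤ s.card := Finset.card_image_le
  have h3 : Multiset.count μ A.charpoly.roots = s.card := by
    rw [roots_charpoly_hermitian hA, Multiset.count_map]
    have hfe : Multiset.filter (fun a => μ = hA.eigenvalues a) Finset.univ.val
        = Multiset.filter (fun a => hA.eigenvalues a = μ) Finset.univ.val := by
      apply Multiset.filter_congr
      intro x _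
      exact ⟨Eq.symm, Eq.symm⟩
    rw [hfe, hs]
    rfl
  omega

lemma single_sub_linearIndependent {V : Type*} [Fintype V] [DecidableEq V] (S : Finset V)
    {u0 : V} (hu0 : u0 ∈ S) :
    LinearIndependent ℝ
      (fun u : {x // x ∈ S.erase u0} => (Pi.single u0 1 - Pi.single (u : V) 1 : V → ℝ)) := by
  rw [Fintype.linearIndependent_iff]
  intro g hg u1
  have h := congrFun hg (u1 : V)
  have hne : (u1 : V) ≠ u0 := (Finset.mem_erase.mp u1.2).1
  simp only [Finset.sum_apply, Pi.smul_apply, Pi.sub_apply, Pi.single_apply, smul_eq_mul,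
    Pi.zero_apply] at h
  rw [Finset.sum_eq_single u1] at h
  · simpa [hne] using h
  · intro b _ hb
    have hb' : (u1 : V) ≠ (b : V) := fun hh => hb (Subtype.ext hh.symm)
    simp [hne, hb']
  · intro habs; exact absurd (Finset.mem_univ u1) habs

theorem stmt10 {V : Type*} [Fintype V] [DecidableEq V] (G : SimpleGraph V)
    (hc : G.Connected) (hn : 2 ≤ Fintype.card V)
    (S : Finset V) (hclique : G.IsClique (S : Set V))
    (hnbr : ∀ u ∈ S, ∀ w ∈ S, G.neighborSet u \ (S : Set V) = G.neighborSet w \ (S : Set V)) :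
    ∃ T : ℝ, (∀ v ∈ S, RTr G v = T) ∧
      S.card - 1 ≤ Multiset.count (T + 1) (RDL G).charpoly.roots := by
  rcases S.eq_empty_or_nonempty with hS | ⟨u0, hu0⟩
  · refine ⟨0, ?_, ?_⟩
    · intro v hv; rw [hS] at hv; exact absurd hv (Finset.notMem_empty v)
    · simp [hS]
  · refine ⟨RTr G u0, fun v hv => RTr_eq_of_mem G hc S hclique hnbr hv hu0, ?_⟩
    have hcard : Fintype.card {x // x ∈ S.erase u0} = S.card - 1 := by
      rw [Fintype.card_coe, Finset.card_erase_of_mem hu0]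
    rw [← hcard]
    exact card_le_count_roots (RDL_isHermitian G) (RTr G u0 + 1)
      (fun u : {x // x ∈ S.erase u0} => (Pi.single u0 1 - Pi.single (u : V) 1))
      (single_sub_linearIndependent S hu0)
      (fun u => RDL_mulVec_eig G hc S hclique hnbr hu0 (Finset.mem_erase.mp u.2).2
        (Finset.mem_erase.mp u.2).1)
end
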